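/- arXiv:1409.1958 — 3 statements merged into one kernel-verified Lean document; each statement's English description precedes it below -/
import Mathlib

section
/- Let A, B be positive bounded operators on a Hilbert space H with R(A) ∩ closure(R(B)) = {0}. Then R(A+B) = R(A) + R(B) if and only if the pair (A, N(B)) is compatible, i.e., N(B) + (A·N(B))^⊥ = H. -/
open ContinuousLinearMap

variable {H : Type*} [NormedAddCommGroup H] [InnerProductSpace ℂ H] [CompleteSpace H]

/-- For positive `A, B` with `R(A) ∩ closure(R(B)) = {0}`: `R(A+B) = R(A) + R(B)` iff
the pair `(A, N(B))` is compatible, i.e. `N(B) + (A(N(B)))^⊥ = H`. -/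
theorem range_additivity_iff_compatible_disjoint (A B : H →L[ℂ] H)
    (hA : A.IsPositive) (hB : B.IsPositive)
    (h : LinearMap.range (A : H →ₗ[ℂ] H) ⊓ (LinearMap.range (B : H →ₗ[ℂ] H)).topologicalClosure = ⊥) :
    LinearMap.range ((A + B : H →L[ℂ] H) : H →ₗ[ℂ] H) = LinearMap.range (A : H →ₗ[ℂ] H) ⊔ LinearMap.range (B : H →ₗ[ℂ] H) ↔
      LinearMap.ker (B : H →ₗ[ℂ] H) ⊔ (Submodule.map (A : H →ₗ[ℂ] H) (LinearMap.ker (B : H →ₗ[ℂ] H)))ᗮ = ⊤ := by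
  have hAsym := (isSelfAdjoint_iff_isSymmetric.mp hA.isSelfAdjoint)
  have hBsym := (isSelfAdjoint_iff_isSymmetric.mp hB.isSelfAdjoint)
  set S := LinearMap.ker (B : H →ₗ[ℂ] H) with hS
  -- x ∈ (A S)ᗮ ↔ A x ∈ Sᗮ
  have horth : ∀ x : H, x ∈ (Submodule.map (A : H →ₗ[ℂ] H) S)ᗮ ↔ A x ∈ Sᗮ := by
    intro x
    constructor
    · intro hx s hs
      have h1 : (inner ℂ (A s) x : ℂ) = 0 := hx (A s) ⟨s, hs, rfl⟩
      have h2 : (inner ℂ s (A x) : ℂ) = inner ℂ (A s) x := (hAsym s x).symm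
      show (inner ℂ s (A x) : ℂ) = 0
      rw [h2, h1]
    · rintro hx _ ⟨s, hs, rfl⟩
      have h1 : (inner ℂ s (A x) : ℂ) = 0 := hx s hs
      have h2 : (inner ℂ (A s) x : ℂ) = inner ℂ s (A x) := hAsym s x
      show (inner ℂ (A s) x : ℂ) = 0
      rw [h2, h1]
  -- ker B = (range B)ᗮ, so Sᗮ = closure (range B)
  have hker : S = (LinearMap.range (B : H →ₗ[ℂ] H))ᗮ := by
    ext x
    constructor
    · rintro hx _ ⟨y, rfl⟩
      have hx' : B x = 0 := hx
      have h2 : (inner ℂ (B y) x : ℂ) = inner ℂ y (B x) := hBsym y x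
      show (inner ℂ (B y) x : ℂ) = 0
      rw [h2, hx', inner_zero_right]
    · intro hx
      have h1 : (inner ℂ (B (B x)) x : ℂ) = 0 := hx (B (B x)) ⟨B x, rfl⟩
      have h2 : (inner ℂ (B (B x)) x : ℂ) = inner ℂ (B x) (B x) := hBsym (B x) x
      have h3 : (inner ℂ (B x) (B x) : ℂ) = 0 := by rw [← h2, h1]
      exact inner_self_eq_zero.mp h3
  have hSorth : Sᗮ = (LinearMap.range (B : H →ₗ[ℂ] H)).topologicalClosure := by
    rw [hker, Submodule.orthogonal_orthogonal_eq_closure]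
  have hzero : ∀ x : H, x ∈ LinearMap.range (A : H →ₗ[ℂ] H) →
      x ∈ (LinearMap.range (B : H →ₗ[ℂ] H)).topologicalClosure → x = 0 := by
    intro x hx hy
    have : x ∈ (⊥ : Submodule ℂ H) := h ▸ Submodule.mem_inf.mpr ⟨hx, hy⟩
    simpa using this
  constructor
  · -- range additivity → compatibility
    intro hr
    rw [Submodule.eq_top_iff']
    intro x
    have hAx : A x ∈ LinearMap.range ((A + B : H →L[ℂ] H) : H →ₗ[ℂ] H) := by
      rw [hr]; exact Submodule.mem_sup_left ⟨x, rfl⟩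
    obtain ⟨z, hz⟩ := hAx
    have hz' : A (x - z) = B z := by
      have : A z + B z = A x := by simpa using hz
      rw [map_sub, ← this]; abel
    have hA0 : A (x - z) = 0 :=
      hzero _ ⟨x - z, rfl⟩ (by
        rw [hz']
        exact Submodule.le_topologicalClosure _ ⟨z, rfl⟩)
    have hBz : B z = 0 := by rw [← hz', hA0]
    refine Submodule.mem_sup.mpr ⟨z, hBz, x - z, (horth _).mpr ?_, by abel⟩
    rw [hA0]; exact Submodule.zero_mem _
  · -- compatibility → range additivity
    intro hc
    have hRA : LinearMap.range (A : H →ₗ[ℂ] H) ≤ LinearMap.range ((A + B : H →L[ℂ] H) : H →ₗ[ℂ] H) := by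
      rintro _ ⟨x, rfl⟩
      obtain ⟨s, hs, t, ht, hst⟩ :=
        Submodule.mem_sup.mp (hc ▸ Submodule.mem_top : x ∈ S ⊔ _)
      have hAt : A t ∈ Sᗮ := (horth t).mp ht
      have hAt0 : A t = 0 := hzero _ ⟨t, rfl⟩ (hSorth ▸ hAt)
      refine ⟨s, ?_⟩
      have hBs : B s = 0 := hs
      have : A x = A s := by rw [← hst, map_add, hAt0, add_zero]
      simp [this, hBs]
    apply le_antisymm
    · rintro _ ⟨x, rfl⟩
      exact Submodule.add_mem_sup ⟨x, rfl⟩ ⟨x, rfl⟩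
    · refine sup_le hRA ?_
      rintro _ ⟨y, rfl⟩
      have h1 : (A + B) y ∈ LinearMap.range ((A + B : H →L[ℂ] H) : H →ₗ[ℂ] H) := ⟨y, rfl⟩
      have h2 : A y ∈ LinearMap.range ((A + B : H →L[ℂ] H) : H →ₗ[ℂ] H) := hRA ⟨y, rfl⟩
      have := Submodule.sub_mem _ h1 h2
      simpa using this
end

section
/- Let Q be a bounded idempotent operator (Q² = Q) on a Hilbert space H. Then the Moore-Penrose inverse of Q equals P_{N(Q)^⊥} P_{R(Q)}, the composition of the orthogonal projection onto R(Q) followed by the orthogonal projection onto N(Q)^⊥. -/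
open ContinuousLinearMap

/-- `P` is the orthogonal projection onto the closed subspace `S`: a selfadjoint
idempotent with range `S`. -/
def IsOrthoProj {E : Type*} [NormedAddCommGroup E] [InnerProductSpace ℂ E] [CompleteSpace E]
    (P : E →L[ℂ] E) (S : Submodule ℂ E) : Prop :=
  IsIdempotentElem P ∧ IsSelfAdjoint P ∧ LinearMap.range (P : E →ₗ[ℂ] E) = S

/-- `X` is the Moore–Penrose inverse of `T`: the four Penrose equations hold. -/
def IsMoorePenrose {E F : Type*} [NormedAddCommGroup E] [InnerProductSpace ℂ E] [CompleteSpace E]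
    [NormedAddCommGroup F] [InnerProductSpace ℂ F] [CompleteSpace F]
    (T : E →L[ℂ] F) (X : F →L[ℂ] E) : Prop :=
  T ∘L X ∘L T = T ∧ X ∘L T ∘L X = X ∧
    IsSelfAdjoint (T ∘L X) ∧ IsSelfAdjoint (X ∘L T)

variable {H : Type*} [NormedAddCommGroup H] [InnerProductSpace ℂ H] [CompleteSpace H]

set_option linter.unusedSectionVars false

private lemma proj_fix (P : H →L[ℂ] H) (hidem : IsIdempotentElem P) {x : H}
    (hx : x ∈ LinearMap.range (P : H →ₗ[ℂ] H)) : P x = x := by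
  obtain ⟨y, rfl⟩ := hx
  have := congrArg (fun T : H →L[ℂ] H => T y) hidem
  simpa [mul_apply] using this

private lemma proj_kill (P : H →L[ℂ] H) (hidem : IsIdempotentElem P)
    (hsa : IsSelfAdjoint P) {x : H}
    (hx : x ∈ (LinearMap.range (P : H →ₗ[ℂ] H))ᗮ) : P x = 0 := by
  have h : (inner ℂ (P x) (P x) : ℂ) = inner ℂ x (P (P x)) := hsa.isSymmetric x (P x)
  rw [proj_fix P hidem (x := P x) ⟨x, rfl⟩] at h
  rw [(Submodule.mem_orthogonal' _ _).mp hx (P x) ⟨x, rfl⟩] at h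
  exact inner_self_eq_zero.mp h

private lemma sub_proj_mem_orth (P : H →L[ℂ] H) (hidem : IsIdempotentElem P)
    (hsa : IsSelfAdjoint P) (x : H) : x - P x ∈ (LinearMap.range (P : H →ₗ[ℂ] H))ᗮ := by
  rw [Submodule.mem_orthogonal]
  rintro u ⟨y, rfl⟩
  have h : (inner ℂ (P y) (x - P x) : ℂ) = inner ℂ y (P (x - P x)) :=
    hsa.isSymmetric y (x - P x)
  have hPP : P (P x) = P x := proj_fix P hidem ⟨x, rfl⟩
  rw [map_sub, hPP, sub_self, inner_zero_right] at h
  exact h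

/-- If `Q` is a bounded idempotent, then `Q† = P_{N(Q)^⊥} P_{R(Q)}`: here `P1` is the
orthogonal projection onto `N(Q)^⊥`, `P2` the one onto `R(Q)`, and `P1 ∘ P2` satisfies
the Penrose equations for `Q`. -/
theorem idempotent_moorePenrose (Q : H →L[ℂ] H) (hQ : IsIdempotentElem Q)
    (P1 P2 : H →L[ℂ] H)
    (hP1 : IsOrthoProj P1 (LinearMap.ker (Q : H →ₗ[ℂ] H))ᗮ)
    (hP2 : IsOrthoProj P2 (LinearMap.range (Q : H →ₗ[ℂ] H))) :
    IsMoorePenrose Q (P1 ∘L P2) := by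
  obtain ⟨h1i, h1s, h1r⟩ := hP1
  obtain ⟨h2i, h2s, h2r⟩ := hP2
  haveI : CompleteSpace (LinearMap.ker (Q : H →ₗ[ℂ] H)) := (ContinuousLinearMap.isClosed_ker Q).completeSpace_coe
  have hQQ : ∀ x, Q (Q x) = Q x := fun x => by
    have := congrArg (fun T : H →L[ℂ] H => T x) hQ
    simpa [mul_apply] using this
  -- Q ∘ P2 = P2 pointwise
  have hQP2 : ∀ x, Q (P2 x) = P2 x := fun x => by
    have hm : P2 x ∈ LinearMap.range (Q : H →ₗ[ℂ] H) := by rw [← h2r]; exact ⟨x, rfl⟩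
    exact proj_fix Q hQ hm
  -- P2 ∘ Q = Q pointwise
  have hP2Q : ∀ x, P2 (Q x) = Q x := fun x =>
    proj_fix P2 h2i (h2r ▸ ⟨x, rfl⟩)
  -- P1 ∘ Q = P1 pointwise
  have hP1Q : ∀ x, P1 (Q x) = P1 x := fun x => by
    have hmem : Q x - x ∈ LinearMap.ker (Q : H →ₗ[ℂ] H) := by
      simp [LinearMap.mem_ker, hQQ x]
    have horth : Q x - x ∈ (LinearMap.range (P1 : H →ₗ[ℂ] H))ᗮ := by
      rw [h1r]
      exact Submodule.le_orthogonal_orthogonal _ hmem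
    have h0 := proj_kill P1 h1i h1s horth
    rw [map_sub, sub_eq_zero] at h0
    exact h0
  -- Q ∘ P1 = Q pointwise
  have hQP1 : ∀ x, Q (P1 x) = Q x := fun x => by
    have horth : x - P1 x ∈ (LinearMap.range (P1 : H →ₗ[ℂ] H))ᗮ := sub_proj_mem_orth P1 h1i h1s x
    rw [h1r, Submodule.orthogonal_orthogonal] at horth
    have h0 : Q (x - P1 x) = 0 := horth
    rw [map_sub, sub_eq_zero] at h0
    exact h0.symm
  have hP2P2 : ∀ x, P2 (P2 x) = P2 x := fun x => proj_fix P2 h2i ⟨x, rfl⟩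
  -- the two operator identities
  have hQX : Q ∘L (P1 ∘L P2) = P2 := by
    ext x; simp [comp_apply, hQP1, hQP2]
  have hXQ : (P1 ∘L P2) ∘L Q = P1 := by
    ext x; simp [comp_apply, hP2Q, hP1Q]
  refine ⟨?_, ?_, ?_, ?_⟩
  · ext x
    simp [comp_apply, hP2Q, hP1Q, hQP1]
  · ext x
    simp [comp_apply, hQP1, hQP2, hP2P2]
  · rw [← comp_assoc] at hQX ⊢
    · rw [hQX]; exact h2s
  · rw [hXQ]; exact h1s
end

section
/- Fill–Fishkind formula in Hilbert space: let A, B ∈ L(H, K) have closed ranges, with R(A) ∩ R(B) = {0}, R(A*) ∩ R(B*) = {0}, R(A+B) = R(A) + R(B) and R(A*+B*) = R(A*) + R(B*). Then (A+B)^† = (I − S)A^†(I − T) + S B^† T, where S = (P_{N(B)^⊥} P_{N(A)})^† and T = (P_{N(A*)} P_{N(B*)^⊥})^†. -/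
open ContinuousLinearMap
open scoped InnerProductSpace

noncomputable section FFaux

local notation "⟪" x ", " y "⟫" => @inner ℂ _ _ x y

variable {E F : Type*} [NormedAddCommGroup E] [InnerProductSpace ℂ E] [CompleteSpace E]
  [NormedAddCommGroup F] [InnerProductSpace ℂ F] [CompleteSpace F]

lemma FF.sa_swap {R : E →L[ℂ] E} (h : IsSelfAdjoint R) (x y : E) :
    ⟪R x, y⟫ = ⟪x, R y⟫ := by
  conv_lhs => rw [← h.adjoint_eq]
  exact ContinuousLinearMap.adjoint_inner_left R y x

lemma FF.op_mem_range {P : E →L[ℂ] E} {M : Submodule ℂ E}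
    (h : IsOrthoProj P M) (x : E) : P x ∈ M := h.2.2 ▸ LinearMap.mem_range_self _ x

lemma FF.op_eq_self {P : E →L[ℂ] E} {M : Submodule ℂ E}
    (h : IsOrthoProj P M) {x : E} (hx : x ∈ M) : P x = x := by
  rw [← h.2.2] at hx
  obtain ⟨y, rfl⟩ := hx
  have := h.1
  calc P (P y) = (P * P) y := rfl
  _ = P y := by rw [this]

lemma FF.op_eq_zero {P : E →L[ℂ] E} {M : Submodule ℂ E}
    (h : IsOrthoProj P M) {x : E} (hx : x ∈ Mᗮ) : P x = 0 := by
  have hz : ∀ y, ⟪P x, y⟫ = 0 := by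
    intro y
    rw [FF.sa_swap h.2.1]
    exact (Submodule.mem_orthogonal' _ _).mp hx _ (FF.op_mem_range h y)
  exact inner_self_eq_zero.mp (hz (P x))

/-- Adjoints of Moore–Penrose pairs. -/
lemma FF.mp_adjoint {G : E →L[ℂ] F} {X : F →L[ℂ] E} (h : IsMoorePenrose G X) :
    IsMoorePenrose (adjoint G) (adjoint X) := by
  obtain ⟨h1, h2, h3, h4⟩ := h
  refine ⟨?_, ?_, ?_, ?_⟩
  · have hc := congrArg adjoint h1
    rw [adjoint_comp, adjoint_comp] at hc
    rwa [comp_assoc] at hc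
  · have hc := congrArg adjoint h2
    rw [adjoint_comp, adjoint_comp] at hc
    rwa [comp_assoc] at hc
  · have hthis : adjoint G ∘L adjoint X = adjoint (X ∘L G) := (adjoint_comp _ _).symm
    rw [hthis, h4.adjoint_eq]
    exact h4
  · have hthis : adjoint X ∘L adjoint G = adjoint (G ∘L X) := (adjoint_comp _ _).symm
    rw [hthis, h3.adjoint_eq]
    exact h3

/-- Core lemma: the Moore–Penrose inverse `T` of `P_{Uᗮ} ∘ P_V` (with `U ⊓ V = ⊥` and
`U` biorthogonally closed) kills `U` and `Uᗮ ⊓ Vᗮ`, and fixes `V`. -/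
lemma FF.core (U V : Submodule ℂ E) (hUV : U ⊓ V = ⊥) (hU2 : Uᗮᗮ ≤ U)
    {P Q T : E →L[ℂ] E} (hP : IsOrthoProj P Uᗮ) (hQ : IsOrthoProj Q V)
    (hT : IsMoorePenrose (P ∘L Q) T) :
    (∀ u ∈ U, T u = 0) ∧ (∀ v ∈ V, T v = v) ∧ (∀ w ∈ Uᗮ ⊓ Vᗮ, T w = 0) := by
  obtain ⟨hG1, hG2, hGT, hTG⟩ := hT
  have hG1' : ∀ x, (P ∘L Q) (T ((P ∘L Q) x)) = (P ∘L Q) x := by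
    intro x
    have := ContinuousLinearMap.ext_iff.mp hG1 x
    simpa using this
  have hG2' : ∀ x, T ((P ∘L Q) (T x)) = T x := by
    intro x
    have := ContinuousLinearMap.ext_iff.mp hG2 x
    simpa using this
  -- vanishing criterion
  have hTzero : ∀ u, (∀ x, ⟪u, (P ∘L Q) x⟫ = 0) → T u = 0 := by
    intro u hu
    have h1 : (P ∘L Q) (T u) = 0 := by
      have hz : ∀ y, ⟪(P ∘L Q) (T u), y⟫ = 0 := by
        intro y
        have e1 : ⟪((P ∘L Q) ∘L T) u, y⟫ = ⟪u, ((P ∘L Q) ∘L T) y⟫ := FF.sa_swap hGT u y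
        simpa using e1.trans (hu (T y))
      exact inner_self_eq_zero.mp (hz _)
    have := hG2' u
    rw [h1, map_zero] at this
    exact this.symm
  have hPzero : ∀ u ∈ U, P u = 0 := fun u hu =>
    FF.op_eq_zero hP (Submodule.le_orthogonal_orthogonal U hu)
  refine ⟨?_, ?_, ?_⟩
  · -- kills U
    intro u hu
    apply hTzero
    intro x
    calc ⟪u, (P ∘L Q) x⟫ = ⟪u, P (Q x)⟫ := rfl
    _ = ⟪P u, Q x⟫ := (FF.sa_swap hP.2.1 u (Q x)).symm
    _ = 0 := by rw [hPzero u hu, inner_zero_left]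
  · -- fixes V
    intro v hv
    have hQv : Q v = v := FF.op_eq_self hQ hv
    have hkerQ : ∀ z, (P ∘L Q) z = 0 → Q z = 0 := by
      intro z hz
      have hmem : Q z ∈ Uᗮᗮ := by
        rw [Submodule.mem_orthogonal]
        intro a ha
        calc ⟪a, Q z⟫ = ⟪P a, Q z⟫ := by rw [FF.op_eq_self hP ha]
        _ = ⟪a, P (Q z)⟫ := FF.sa_swap hP.2.1 a (Q z)
        _ = 0 := by
            have : P (Q z) = 0 := hz
            rw [this, inner_zero_right]
      have : Q z ∈ U ⊓ V := ⟨hU2 hmem, FF.op_mem_range hQ z⟩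
      rw [hUV] at this
      simpa using this
    have h5 : Q (v - T ((P ∘L Q) v)) = 0 := by
      apply hkerQ
      rw [map_sub, hG1' v, sub_self]
    have h6 : Q (T ((P ∘L Q) v)) = v := by
      rw [map_sub] at h5
      have := sub_eq_zero.mp h5
      rw [← this, hQv]
    set r := T ((P ∘L Q) v) - v with hr
    have hQr : Q r = 0 := by rw [hr, map_sub, h6, hQv, sub_self]
    have hGr0 : (P ∘L Q) r = 0 := by
      show P (Q r) = 0
      rw [hQr, map_zero]
    have hrv : ⟪r, v⟫ = 0 := by
      calc ⟪r, v⟫ = ⟪r, Q (T ((P ∘L Q) v))⟫ := by rw [h6]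
      _ = ⟪Q r, T ((P ∘L Q) v)⟫ := (FF.sa_swap hQ.2.1 r _).symm
      _ = 0 := by rw [hQr, inner_zero_left]
    have hrT : ⟪r, T ((P ∘L Q) v)⟫ = 0 := by
      calc ⟪r, T ((P ∘L Q) v)⟫ = ⟪r, (T ∘L (P ∘L Q)) v⟫ := rfl
      _ = ⟪(T ∘L (P ∘L Q)) r, v⟫ := (FF.sa_swap hTG r v).symm
      _ = ⟪T ((P ∘L Q) r), v⟫ := rfl
      _ = 0 := by rw [hGr0, map_zero, inner_zero_left]
    have hrr : ⟪r, r⟫ = 0 := by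
      rw [hr]
      rw [inner_sub_right]
      rw [← hr, hrT, hrv, sub_zero]
    have hr0 : r = 0 := inner_self_eq_zero.mp hrr
    have hTGv : T ((P ∘L Q) v) = v := sub_eq_zero.mp hr0
    have hPv : (P ∘L Q) v = P v := by
      show P (Q v) = P v
      rw [hQv]
    have hT1 : T (P v) = v := by rw [← hPv]; exact hTGv
    have hT2 : T (v - P v) = 0 := by
      apply hTzero
      intro x
      have hPP : P (v - P v) = 0 := by
        rw [map_sub]
        have : P (P v) = P v := by
          calc P (P v) = (P * P) v := rfl
          _ = P v := by rw [hP.1]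
        rw [this, sub_self]
      calc ⟪v - P v, (P ∘L Q) x⟫ = ⟪v - P v, P (Q x)⟫ := rfl
      _ = ⟪P (v - P v), Q x⟫ := (FF.sa_swap hP.2.1 _ _).symm
      _ = 0 := by rw [hPP, inner_zero_left]
    calc T v = T (P v + (v - P v)) := by rw [add_sub_cancel]
    _ = T (P v) + T (v - P v) := map_add _ _ _
    _ = v := by rw [hT1, hT2, add_zero]
  · -- kills Uᗮ ⊓ Vᗮ
    intro w hw
    obtain ⟨hwU, hwV⟩ := Submodule.mem_inf.mp hw
    apply hTzero
    intro x
    calc ⟪w, (P ∘L Q) x⟫ = ⟪w, P (Q x)⟫ := rfl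
    _ = ⟪P w, Q x⟫ := (FF.sa_swap hP.2.1 _ _).symm
    _ = ⟪w, Q x⟫ := by rw [FF.op_eq_self hP hwU]
    _ = ⟪Q w, x⟫ := (FF.sa_swap hQ.2.1 _ _).symm
    _ = 0 := by rw [FF.op_eq_zero hQ hwV, inner_zero_left]

/-- Projection lemma: an operator that fixes `U` and `V` and kills `Uᗮ ⊓ Vᗮ` is
`1 - P_{Uᗮ ⊓ Vᗮ}`, in particular selfadjoint. -/
lemma FF.projLemma (U V : Submodule ℂ E) (R : E →L[ℂ] E)
    (hRU : ∀ u ∈ U, R u = u) (hRV : ∀ v ∈ V, R v = v)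
    (hRW : ∀ w ∈ Uᗮ ⊓ Vᗮ, R w = 0) :
    (∀ x, x - R x ∈ Uᗮ ⊓ Vᗮ) ∧ (∀ z ∈ (Uᗮ ⊓ Vᗮ)ᗮ, R z = z) ∧ IsSelfAdjoint R := by
  have hWclosed : IsClosed ((Uᗮ ⊓ Vᗮ : Submodule ℂ E) : Set E) := by
    rw [Submodule.inf_orthogonal]
    exact Submodule.isClosed_orthogonal _
  haveI : CompleteSpace (Uᗮ ⊓ Vᗮ : Submodule ℂ E) := hWclosed.completeSpace_coe
  have hid : ∀ z ∈ (Uᗮ ⊓ Vᗮ)ᗮ, R z = z := by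
    intro z hz
    have hWo : (Uᗮ ⊓ Vᗮ)ᗮ = (U ⊔ V).topologicalClosure := by
      rw [Submodule.inf_orthogonal]
      exact (U ⊔ V).orthogonal_orthogonal_eq_closure
    rw [hWo] at hz
    have hset : ((U ⊔ V : Submodule ℂ E) : Set E) ⊆ {x | R x = x} := by
      intro x hx
      obtain ⟨u, hu, v, hv, rfl⟩ := Submodule.mem_sup.mp hx
      show R (u + v) = u + v
      rw [map_add, hRU u hu, hRV v hv]
    have hcl : closure ((U ⊔ V : Submodule ℂ E) : Set E) ⊆ {x | R x = x} :=
      closure_minimal hset (isClosed_eq R.continuous continuous_id)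
    exact hcl hz
  have hval : ∀ x, R x = x - (Submodule.orthogonalProjection (Uᗮ ⊓ Vᗮ) x : E) := by
    intro x
    have hxdec : (Submodule.orthogonalProjection (Uᗮ ⊓ Vᗮ) x : E) +
        (x - (Submodule.orthogonalProjection (Uᗮ ⊓ Vᗮ) x : E)) = x := by abel
    calc R x = R ((Submodule.orthogonalProjection (Uᗮ ⊓ Vᗮ) x : E) +
        (x - (Submodule.orthogonalProjection (Uᗮ ⊓ Vᗮ) x : E))) := by rw [hxdec]
    _ = R ((Submodule.orthogonalProjection (Uᗮ ⊓ Vᗮ) x : E)) +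
        R (x - (Submodule.orthogonalProjection (Uᗮ ⊓ Vᗮ) x : E)) := map_add _ _ _
    _ = 0 + (x - (Submodule.orthogonalProjection (Uᗮ ⊓ Vᗮ) x : E)) := by
        rw [hRW _ (SetLike.coe_mem _), hid (x - (Submodule.orthogonalProjection (Uᗮ ⊓ Vᗮ) x : E)) (Submodule.sub_starProjection_mem_orthogonal (K := Uᗮ ⊓ Vᗮ) x)]
    _ = x - (Submodule.orthogonalProjection (Uᗮ ⊓ Vᗮ) x : E) := zero_add _
  refine ⟨?_, hid, ?_⟩
  · intro x
    have := hval x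
    have h9 : x - R x = (Submodule.orthogonalProjection (Uᗮ ⊓ Vᗮ) x : E) := by
      rw [this]; abel
    rw [h9]
    exact SetLike.coe_mem _
  · rw [ContinuousLinearMap.isSelfAdjoint_iff_isSymmetric]
    intro x y
    show ⟪R x, y⟫ = ⟪x, R y⟫
    rw [hval x, hval y, inner_sub_left, inner_sub_right]
    exact congrArg (fun t => ⟪x, y⟫ - t) (Submodule.inner_starProjection_left_eq_right _ x y)

-- auxiliary facts about a Moore–Penrose pair
lemma FF.mp_pt1 {A : E →L[ℂ] F} {pA : F →L[ℂ] E} (h : IsMoorePenrose A pA) (x : E) :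
    A (pA (A x)) = A x := by
  have := ContinuousLinearMap.ext_iff.mp h.1 x
  simpa using this

lemma FF.mp_zero {A : E →L[ℂ] F} {pA : F →L[ℂ] E} (h : IsMoorePenrose A pA)
    {w : F} (hw : w ∈ (LinearMap.range (A : E →ₗ[ℂ] F))ᗮ) : pA w = 0 := by
  have hPA : (A ∘L pA) w = 0 := by
    have hz : ∀ y, ⟪(A ∘L pA) w, y⟫ = 0 := by
      intro y
      calc ⟪(A ∘L pA) w, y⟫ = ⟪w, (A ∘L pA) y⟫ := FF.sa_swap h.2.2.1 w y
      _ = 0 := (Submodule.mem_orthogonal' _ _).mp hw _ ⟨pA y, rfl⟩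
    exact inner_self_eq_zero.mp (hz _)
  have := ContinuousLinearMap.ext_iff.mp h.2.1 w
  simp only [ContinuousLinearMap.coe_comp', Function.comp_apply] at this
  have h2 : A (pA w) = 0 := hPA
  rw [h2, map_zero] at this
  exact this.symm

lemma FF.mp_qmem {A : E →L[ℂ] F} {pA : F →L[ℂ] E} (h : IsMoorePenrose A pA) (x : E) :
    pA (A x) ∈ (LinearMap.ker (A : E →ₗ[ℂ] F))ᗮ := by
  rw [Submodule.mem_orthogonal]
  intro k hk
  have hk' : A k = 0 := hk
  calc ⟪k, pA (A x)⟫ = ⟪k, (pA ∘L A) x⟫ := rfl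
  _ = ⟪(pA ∘L A) k, x⟫ := (FF.sa_swap h.2.2.2 _ _).symm
  _ = 0 := by
      show ⟪pA (A k), x⟫ = 0
      rw [hk', map_zero, inner_zero_left]

lemma FF.mp_qfix {A : E →L[ℂ] F} {pA : F →L[ℂ] E} (h : IsMoorePenrose A pA)
    {u : E} (hu : u ∈ (LinearMap.ker (A : E →ₗ[ℂ] F))ᗮ) : pA (A u) = u := by
  have hmem : u - pA (A u) ∈ LinearMap.ker (A : E →ₗ[ℂ] F) := by
    have : A (u - pA (A u)) = 0 := by rw [map_sub, FF.mp_pt1 h u, sub_self]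
    exact this
  have hmem2 : u - pA (A u) ∈ (LinearMap.ker (A : E →ₗ[ℂ] F))ᗮ :=
    Submodule.sub_mem _ hu (FF.mp_qmem h u)
  have : u - pA (A u) ∈ LinearMap.ker (A : E →ₗ[ℂ] F) ⊓ (LinearMap.ker (A : E →ₗ[ℂ] F))ᗮ := ⟨hmem, hmem2⟩
  rw [Submodule.inf_orthogonal_eq_bot] at this
  have h0 : u - pA (A u) = 0 := by simpa using this
  have := sub_eq_zero.mp h0
  exact this.symm

lemma FF.mem_range_adjoint {A : E →L[ℂ] F} {pA : F →L[ℂ] E} (h : IsMoorePenrose A pA) :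
    (LinearMap.ker (A : E →ₗ[ℂ] F))ᗮ ≤ LinearMap.range (adjoint A : F →ₗ[ℂ] E) := by
  intro u hu
  have h1 : u = pA (A u) := (FF.mp_qfix h hu).symm
  have h2 : pA ∘L A = adjoint A ∘L adjoint pA := by
    have := h.2.2.2.adjoint_eq
    rw [← this, adjoint_comp]
  have : pA (A u) = adjoint A (adjoint pA u) := by
    calc pA (A u) = (pA ∘L A) u := rfl
    _ = (adjoint A ∘L adjoint pA) u := by rw [h2]
    _ = adjoint A (adjoint pA u) := rfl
  rw [h1, this]
  exact ⟨adjoint pA u, rfl⟩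

lemma FF.ker_adjoint (A : E →L[ℂ] F) :
    LinearMap.ker (adjoint A : F →ₗ[ℂ] E) = (LinearMap.range (A : E →ₗ[ℂ] F))ᗮ := by
  ext x
  constructor
  · intro hx
    have hx' : adjoint A x = 0 := hx
    rw [Submodule.mem_orthogonal]
    rintro y ⟨z, rfl⟩
    calc ⟪A z, x⟫ = ⟪z, adjoint A x⟫ := by rw [adjoint_inner_right]
    _ = 0 := by rw [hx', inner_zero_right]
  · intro hx
    have hz : ∀ y, ⟪adjoint A x, y⟫ = 0 := by
      intro y
      calc ⟪adjoint A x, y⟫ = ⟪x, A y⟫ := adjoint_inner_left A y x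
      _ = 0 := (Submodule.mem_orthogonal' _ _).mp hx _ ⟨y, rfl⟩
    exact inner_self_eq_zero.mp (hz _)

lemma FF.mem_range_adjoint' (A : E →L[ℂ] F) (y : F) :
    adjoint A y ∈ (LinearMap.ker (A : E →ₗ[ℂ] F))ᗮ := by
  rw [Submodule.mem_orthogonal]
  intro k hk
  have hk' : A k = 0 := hk
  calc ⟪k, adjoint A y⟫ = ⟪A k, y⟫ := adjoint_inner_right A k y
  _ = 0 := by rw [hk', inner_zero_left]

end FFaux

variable {H K : Type*} [NormedAddCommGroup H] [InnerProductSpace ℂ H] [CompleteSpace H]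
  [NormedAddCommGroup K] [InnerProductSpace ℂ K] [CompleteSpace K]

set_option maxHeartbeats 1600000

/-- Fill–Fishkind formula in Hilbert space: if `A, B : H → K` have closed ranges,
`R(A) ∩ R(B) = {0}`, `R(A*) ∩ R(B*) = {0}`, `R(A+B) = R(A) + R(B)` and
`R(A*+B*) = R(A*) + R(B*)`, then `(A+B)† = (I - S) A† (I - T) + S B† T`, where
`S = (P_{N(B)^⊥} P_{N(A)})†` and `T = (P_{N(A*)} P_{N(B*)^⊥})†`. -/
theorem fill_fishkind (A B : H →L[ℂ] K)
    (hRA : IsClosed ((LinearMap.range (A : H →ₗ[ℂ] K) : Submodule ℂ K) : Set K))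
    (hRB : IsClosed ((LinearMap.range (B : H →ₗ[ℂ] K) : Submodule ℂ K) : Set K))
    (h1 : LinearMap.range (A : H →ₗ[ℂ] K) ⊓ LinearMap.range (B : H →ₗ[ℂ] K) = ⊥)
    (h2 : LinearMap.range (adjoint A : K →ₗ[ℂ] H) ⊓ LinearMap.range (adjoint B : K →ₗ[ℂ] H) = ⊥)
    (h3 : LinearMap.range ((A + B : H →L[ℂ] K) : H →ₗ[ℂ] K) = LinearMap.range (A : H →ₗ[ℂ] K) ⊔ LinearMap.range (B : H →ₗ[ℂ] K))
    (h4 : LinearMap.range ((adjoint A + adjoint B : K →L[ℂ] H) : K →ₗ[ℂ] H) =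
      LinearMap.range (adjoint A : K →ₗ[ℂ] H) ⊔ LinearMap.range (adjoint B : K →ₗ[ℂ] H))
    (PNA PNB' : H →L[ℂ] H)
    (hPNA : IsOrthoProj PNA (LinearMap.ker (A : H →ₗ[ℂ] K)))
    (hPNB' : IsOrthoProj PNB' (LinearMap.ker (B : H →ₗ[ℂ] K))ᗮ)
    (PNAs PNBs' : K →L[ℂ] K)
    (hPNAs : IsOrthoProj PNAs (LinearMap.ker (adjoint A : K →ₗ[ℂ] H)))
    (hPNBs' : IsOrthoProj PNBs' (LinearMap.ker (adjoint B : K →ₗ[ℂ] H))ᗮ)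
    (S : H →L[ℂ] H) (hS : IsMoorePenrose (PNB' ∘L PNA) S)
    (T : K →L[ℂ] K) (hT : IsMoorePenrose (PNAs ∘L PNBs') T)
    (pA : K →L[ℂ] H) (hpA : IsMoorePenrose A pA)
    (pB : K →L[ℂ] H) (hpB : IsMoorePenrose B pB) :
    IsMoorePenrose (A + B) ((1 - S) ∘L pA ∘L (1 - T) + S ∘L pB ∘L T) := by
  set X := (1 - S) ∘L pA ∘L (1 - T) + S ∘L pB ∘L T with hXdef
  have hXpt : ∀ y, X y = (pA (y - T y) - S (pA (y - T y))) + S (pB (T y)) := by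
    intro y
    simp only [hXdef, ContinuousLinearMap.add_apply, ContinuousLinearMap.coe_comp',
      Function.comp_apply, ContinuousLinearMap.sub_apply, ContinuousLinearMap.one_apply]
  -- biorthogonals of the ranges and kernels
  have hAoo : (LinearMap.range (A : H →ₗ[ℂ] K))ᗮᗮ = LinearMap.range (A : H →ₗ[ℂ] K) := by
    haveI := hRA.completeSpace_coe
    exact Submodule.orthogonal_orthogonal _
  have hBoo : (LinearMap.range (B : H →ₗ[ℂ] K))ᗮᗮ = LinearMap.range (B : H →ₗ[ℂ] K) := by
    haveI := hRB.completeSpace_coe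
    exact Submodule.orthogonal_orthogonal _
  have hkerAoo : (LinearMap.ker (A : H →ₗ[ℂ] K))ᗮᗮ = LinearMap.ker (A : H →ₗ[ℂ] K) := by
    haveI := (ContinuousLinearMap.isClosed_ker A).completeSpace_coe
    exact Submodule.orthogonal_orthogonal _
  have hkerBoo : (LinearMap.ker (B : H →ₗ[ℂ] K))ᗮᗮ = LinearMap.ker (B : H →ₗ[ℂ] K) := by
    haveI := (ContinuousLinearMap.isClosed_ker B).completeSpace_coe
    exact Submodule.orthogonal_orthogonal _
  -- first instance of the core lemma : facts about T
  have hP1 : IsOrthoProj PNAs (LinearMap.range (A : H →ₗ[ℂ] K))ᗮ := by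
    rwa [FF.ker_adjoint A] at hPNAs
  have hQ1 : IsOrthoProj PNBs' (LinearMap.range (B : H →ₗ[ℂ] K)) := by
    rwa [FF.ker_adjoint B, hBoo] at hPNBs'
  obtain ⟨hTa, hTb, hTc⟩ :=
    FF.core (LinearMap.range (A : H →ₗ[ℂ] K)) (LinearMap.range (B : H →ₗ[ℂ] K)) h1 (le_of_eq hAoo) hP1 hQ1 hT
  -- second instance of the core lemma : facts about adjoint S
  have hUV2 : (LinearMap.ker (A : H →ₗ[ℂ] K))ᗮ ⊓ (LinearMap.ker (B : H →ₗ[ℂ] K))ᗮ = ⊥ := by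
    have hle : (LinearMap.ker (A : H →ₗ[ℂ] K))ᗮ ⊓ (LinearMap.ker (B : H →ₗ[ℂ] K))ᗮ ≤
        LinearMap.range (adjoint A : K →ₗ[ℂ] H) ⊓ LinearMap.range (adjoint B : K →ₗ[ℂ] H) :=
      inf_le_inf (FF.mem_range_adjoint hpA) (FF.mem_range_adjoint hpB)
    rw [h2] at hle
    exact le_bot_iff.mp hle
  have hU22 : ((LinearMap.ker (A : H →ₗ[ℂ] K))ᗮ)ᗮᗮ ≤ (LinearMap.ker (A : H →ₗ[ℂ] K))ᗮ := by rw [hkerAoo]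
  have hP2 : IsOrthoProj PNA ((LinearMap.ker (A : H →ₗ[ℂ] K))ᗮ)ᗮ := by rw [hkerAoo]; exact hPNA
  have hT2 : IsMoorePenrose (PNA ∘L PNB') (adjoint S) := by
    have h := FF.mp_adjoint hS
    rwa [adjoint_comp, hPNA.2.1.adjoint_eq, hPNB'.2.1.adjoint_eq] at h
  obtain ⟨hSa, hSb, hSc⟩ :=
    FF.core ((LinearMap.ker (A : H →ₗ[ℂ] K))ᗮ) ((LinearMap.ker (B : H →ₗ[ℂ] K))ᗮ) hUV2 hU22 hP2 hPNB' hT2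
  -- operator facts about S
  have hASz : ∀ z, A (S z) = 0 := by
    intro z
    apply ext_inner_right ℂ
    intro y
    rw [inner_zero_left]
    calc ⟪A (S z), y⟫_ℂ = ⟪S z, adjoint A y⟫_ℂ := (adjoint_inner_right A (S z) y).symm
    _ = ⟪z, adjoint S (adjoint A y)⟫_ℂ := (adjoint_inner_right S z _).symm
    _ = 0 := by rw [hSa _ (FF.mem_range_adjoint' A y), inner_zero_right]
  have hBSz : ∀ z, B (S z) = B z := by
    intro z
    apply ext_inner_right ℂ
    intro y
    calc ⟪B (S z), y⟫_ℂ = ⟪S z, adjoint B y⟫_ℂ := (adjoint_inner_right B (S z) y).symm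
    _ = ⟪z, adjoint S (adjoint B y)⟫_ℂ := (adjoint_inner_right S z _).symm
    _ = ⟪z, adjoint B y⟫_ℂ := by rw [hSb _ (FF.mem_range_adjoint' B y)]
    _ = ⟪B z, y⟫_ℂ := adjoint_inner_right B z y
  -- pointwise T facts
  have hTA : ∀ x, T (A x) = 0 := fun x => hTa _ (LinearMap.mem_range_self _ x)
  have hTB : ∀ x, T (B x) = B x := fun x => hTb _ (LinearMap.mem_range_self _ x)
  -- pointwise form of (A+B) ∘ X
  have hMXpt : ∀ y, ((A + B) ∘L X) y = A (pA (y - T y)) + B (pB (T y)) := by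
    intro y
    simp only [ContinuousLinearMap.coe_comp', Function.comp_apply]
    rw [hXpt y, ContinuousLinearMap.add_apply, map_add A, map_sub A, map_add B, map_sub B,
      hASz, hASz, hBSz, hBSz]
    abel
  -- projection lemma for (A+B) ∘ X
  have hyp1 : ∀ u ∈ LinearMap.range (A : H →ₗ[ℂ] K), ((A + B) ∘L X) u = u := by
    rintro u ⟨w, rfl⟩
    show ((A + B) ∘L X) (A w) = A w
    rw [hMXpt, hTA, sub_zero, map_zero, map_zero, add_zero, FF.mp_pt1 hpA]
  have hyp2 : ∀ v ∈ LinearMap.range (B : H →ₗ[ℂ] K), ((A + B) ∘L X) v = v := by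
    rintro v ⟨w, rfl⟩
    show ((A + B) ∘L X) (B w) = B w
    rw [hMXpt, hTB, sub_self, map_zero, map_zero, zero_add, FF.mp_pt1 hpB]
  have hyp3 : ∀ w ∈ (LinearMap.range (A : H →ₗ[ℂ] K))ᗮ ⊓ (LinearMap.range (B : H →ₗ[ℂ] K))ᗮ, ((A + B) ∘L X) w = 0 := by
    intro w hw
    obtain ⟨hw1, _⟩ := Submodule.mem_inf.mp hw
    rw [hMXpt, hTc w hw, sub_zero, FF.mp_zero hpA hw1, map_zero, map_zero, map_zero, add_zero]
  obtain ⟨hW1, hid1, hsa1⟩ :=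
    FF.projLemma (LinearMap.range (A : H →ₗ[ℂ] K)) (LinearMap.range (B : H →ₗ[ℂ] K)) ((A + B) ∘L X) hyp1 hyp2 hyp3
  -- X kills (range A)ᗮ ⊓ (range B)ᗮ
  have hXW : ∀ w ∈ (LinearMap.range (A : H →ₗ[ℂ] K))ᗮ ⊓ (LinearMap.range (B : H →ₗ[ℂ] K))ᗮ, X w = 0 := by
    intro w hw
    obtain ⟨hw1, _⟩ := Submodule.mem_inf.mp hw
    rw [hXpt, hTc w hw, sub_zero, FF.mp_zero hpA hw1]
    simp
  -- (A+B) x lands in the biorthogonal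
  have hWperp : ∀ x, (A + B) x ∈ ((LinearMap.range (A : H →ₗ[ℂ] K))ᗮ ⊓ (LinearMap.range (B : H →ₗ[ℂ] K))ᗮ)ᗮ := by
    intro x
    have hA' : A x ∈ ((LinearMap.range (A : H →ₗ[ℂ] K))ᗮ ⊓ (LinearMap.range (B : H →ₗ[ℂ] K))ᗮ)ᗮ :=
      (Submodule.orthogonal_le inf_le_left)
        (Submodule.le_orthogonal_orthogonal _ (LinearMap.mem_range_self _ x))
    have hB' : B x ∈ ((LinearMap.range (A : H →ₗ[ℂ] K))ᗮ ⊓ (LinearMap.range (B : H →ₗ[ℂ] K))ᗮ)ᗮ :=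
      (Submodule.orthogonal_le inf_le_right)
        (Submodule.le_orthogonal_orthogonal _ (LinearMap.mem_range_self _ x))
    rw [ContinuousLinearMap.add_apply]
    exact Submodule.add_mem _ hA' hB'
  refine ⟨?_, ?_, hsa1, ?_⟩
  · -- Penrose 1
    ext x
    exact hid1 _ (hWperp x)
  · -- Penrose 2
    ext x
    have hmem := hW1 x
    have h0 := hXW _ hmem
    rw [map_sub] at h0
    exact (sub_eq_zero.mp h0).symm
  · -- Penrose 4
    set R4 := (pA ∘L A) ∘L (1 - adjoint S) + (pB ∘L B) ∘L adjoint S with hR4def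
    have hR4pt : ∀ x, R4 x = pA (A (x - adjoint S x)) + pB (B (adjoint S x)) := by
      intro x
      simp only [hR4def, ContinuousLinearMap.add_apply, ContinuousLinearMap.coe_comp',
        Function.comp_apply, ContinuousLinearMap.sub_apply, ContinuousLinearMap.one_apply]
    have hyp1' : ∀ u ∈ (LinearMap.ker (A : H →ₗ[ℂ] K))ᗮ, R4 u = u := by
      intro u hu
      rw [hR4pt, hSa u hu, sub_zero, map_zero, map_zero, add_zero, FF.mp_qfix hpA hu]
    have hyp2' : ∀ v ∈ (LinearMap.ker (B : H →ₗ[ℂ] K))ᗮ, R4 v = v := by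
      intro v hv
      rw [hR4pt, hSb v hv, sub_self, map_zero, map_zero, zero_add, FF.mp_qfix hpB hv]
    have hyp3' : ∀ w ∈ ((LinearMap.ker (A : H →ₗ[ℂ] K))ᗮ)ᗮ ⊓ ((LinearMap.ker (B : H →ₗ[ℂ] K))ᗮ)ᗮ, R4 w = 0 := by
      intro w hw
      obtain ⟨hw1, _⟩ := Submodule.mem_inf.mp hw
      rw [hkerAoo] at hw1
      have hw1' : A w = 0 := hw1
      rw [hR4pt, hSc w hw, sub_zero, hw1', map_zero, map_zero, map_zero, add_zero]
    obtain ⟨-, -, hsa4⟩ :=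
      FF.projLemma ((LinearMap.ker (A : H →ₗ[ℂ] K))ᗮ) ((LinearMap.ker (B : H →ₗ[ℂ] K))ᗮ) R4 hyp1' hyp2' hyp3'
    have sA : ∀ (a : H) (b : H), ⟪pA (A a), b⟫_ℂ = ⟪a, pA (A b)⟫_ℂ := fun a b =>
      FF.sa_swap hpA.2.2.2 a b
    have sB : ∀ (a : H) (b : H), ⟪pB (B a), b⟫_ℂ = ⟪a, pB (B b)⟫_ℂ := fun a b =>
      FF.sa_swap hpB.2.2.2 a b
    have sS : ∀ (a : H) (b : H), ⟪a, S b⟫_ℂ = ⟪adjoint S a, b⟫_ℂ := fun a b =>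
      (adjoint_inner_left S b a).symm
    have hadj : R4 = adjoint (X ∘L (A + B)) := by
      rw [eq_adjoint_iff]
      intro x y
      have hXMpt : (X ∘L (A + B)) y = (pA (A y) - S (pA (A y))) + S (pB (B y)) := by
        simp only [ContinuousLinearMap.coe_comp', Function.comp_apply]
        rw [hXpt]
        have h5 : T ((A + B) y) = B y := by
          rw [ContinuousLinearMap.add_apply, map_add, hTA, hTB, zero_add]
        rw [h5]
        have h6 : (A + B) y - B y = A y := by rw [ContinuousLinearMap.add_apply]; abel
        rw [h6]
      rw [hXMpt, hR4pt]
      calc ⟪pA (A (x - adjoint S x)) + pB (B (adjoint S x)), y⟫_ℂ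
          = ⟪pA (A x), y⟫_ℂ - ⟪pA (A (adjoint S x)), y⟫_ℂ + ⟪pB (B (adjoint S x)), y⟫_ℂ := by
            rw [map_sub, map_sub, inner_add_left, inner_sub_left]
      _ = ⟪x, pA (A y)⟫_ℂ - ⟪adjoint S x, pA (A y)⟫_ℂ + ⟪adjoint S x, pB (B y)⟫_ℂ := by
            rw [sA, sA, sB]
      _ = ⟪x, pA (A y)⟫_ℂ - ⟪x, S (pA (A y))⟫_ℂ + ⟪x, S (pB (B y))⟫_ℂ := by
            rw [← sS, ← sS]
      _ = ⟪x, (pA (A y) - S (pA (A y))) + S (pB (B y))⟫_ℂ := by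
            rw [inner_add_right, inner_sub_right]
    have h8 : star (X ∘L (A + B)) = R4 := by
      rw [ContinuousLinearMap.star_eq_adjoint, ← hadj]
    have h9 : X ∘L (A + B) = R4 := by
      conv_lhs => rw [← star_star (X ∘L (A + B)), h8]
      exact hsa4
    show star (X ∘L (A + B)) = X ∘L (A + B)
    rw [h8]
    exact h9.symm
end
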